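/- Let H be a complex Hilbert space, A, B ∈ B(H) with A∘B ≠ 0, and φ ∈ [0, 2π) with A∘B = e^{iφ} • (B∘A). Then: (1) if A is self-adjoint or B is self-adjoint, then φ = 0 or φ = π; (2) if A and B are both self-adjoint and at least one of them is positive, then φ = 0. -/

import Mathlib

open Complex ContinuousLinearMap

section Aux

variable {H : Type*} [NormedAddCommGroup H] [InnerProductSpace ℂ H] [CompleteSpace H]

/-- A nonzero self-adjoint operator has a nonzero real point in its spectrum. -/
private lemma aux_spec_exists {R : H →L[ℂ] H} (hR : IsSelfAdjoint R) (h0 : R ≠ 0) :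
    ∃ w : ℂ, w ∈ spectrum ℂ R ∧ w ≠ 0 ∧ w.im = 0 := by
  have : Nontrivial (H →L[ℂ] H) := nontrivial_of_ne R 0 h0
  obtain ⟨w, hw, hw'⟩ :=
    spectrum.exists_nnnorm_eq_spectralRadius_of_nonempty (spectrum.nonempty R)
  rw [hR.spectralRadius_eq_nnnorm] at hw'
  refine ⟨w, hw, ?_, hR.im_eq_zero_of_mem_spectrum hw⟩
  intro h
  apply h0
  have : (‖w‖₊ : ENNReal) = (‖R‖₊ : ENNReal) := hw'
  rw [h] at this
  simp only [nnnorm_zero, ENNReal.coe_zero] at this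
  rwa [← nnnorm_eq_zero, ← ENNReal.coe_eq_zero (r := ‖R‖₊), eq_comm]

private lemma aux_smul_spec {c : ℂ} (hc : c ≠ 0) {T : H →L[ℂ] H} {w : ℂ}
    (hw : w ∈ spectrum ℂ (c • T)) : c⁻¹ * w ∈ spectrum ℂ T := by
  have hw : w ∈ spectrum ℂ ((Units.mk0 c hc : ℂˣ) • T) := hw
  rw [spectrum.unit_smul_eq_smul T (Units.mk0 c hc)] at hw
  obtain ⟨z, hz, hzw⟩ := hw
  have hzw' : c * z = w := hzw
  have hzz : c⁻¹ * w = z := by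
    rw [← hzw', ← mul_assoc, inv_mul_cancel₀ hc, one_mul]
  rwa [hzz]

private lemma aux_smul_spec' {c : ℂ} (hc : c ≠ 0) {T : H →L[ℂ] H} {z : ℂ}
    (hz : z ∈ spectrum ℂ T) : c * z ∈ spectrum ℂ (c • T) := by
  show c * z ∈ spectrum ℂ ((Units.mk0 c hc : ℂˣ) • T)
  rw [spectrum.unit_smul_eq_smul T (Units.mk0 c hc)]
  exact ⟨z, hz, rfl⟩

/-- Core lemma: if `A`, `S` are self-adjoint, `A*S ≠ 0` and
`A*S = e^{iφ} • (S*A)`, then `sin φ = 0`. -/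
private lemma aux_core (A S : H →L[ℂ] H) (hA : IsSelfAdjoint A) (hS : IsSelfAdjoint S)
    (φ : ℝ) (h : A * S = Complex.exp (φ * I) • (S * A)) (hne : A * S ≠ 0) :
    Real.sin φ = 0 := by
  set lam : ℂ := Complex.exp (φ * I) with hlam
  have hlam0 : lam ≠ 0 := Complex.exp_ne_zero _
  set c : ℂ := Complex.exp (((-(φ / 2) : ℝ) : ℂ) * I) with hc
  have hc0 : c ≠ 0 := Complex.exp_ne_zero _
  have hstarT : star (A * S) = S * A := by
    rw [star_mul, hA.star_eq, hS.star_eq]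
  have hSA : S * A = lam⁻¹ • (A * S) := by
    rw [h, smul_smul, inv_mul_cancel₀ hlam0, one_smul]
  -- R = c • (A * S) is self-adjoint
  have hR : IsSelfAdjoint (c • (A * S)) := by
    have hconj : (starRingEnd ℂ) c = Complex.exp (((φ / 2 : ℝ) : ℂ) * I) := by
      rw [hc, ← Complex.exp_conj]
      congr 1
      rw [map_mul, Complex.conj_ofReal, Complex.conj_I]
      push_cast
      ring
    have hst : star (c • (A * S)) = ((starRingEnd ℂ) c * lam⁻¹) • (A * S) := by
      rw [star_smul, hstarT, hSA, smul_smul]; rfl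
    rw [IsSelfAdjoint, hst]
    congr 1
    rw [hconj, hlam, ← Complex.exp_neg, ← Complex.exp_add, hc]
    congr 1
    push_cast
    ring
  have hR0 : c • (A * S) ≠ 0 := smul_ne_zero hc0 hne
  obtain ⟨w, hw, hw0, hwim⟩ := aux_spec_exists hR hR0
  -- z := c⁻¹ * w is a nonzero element of spectrum of T
  have hz : c⁻¹ * w ∈ spectrum ℂ (A * S) := aux_smul_spec hc0 hw
  have hz0 : c⁻¹ * w ≠ 0 := mul_ne_zero (inv_ne_zero hc0) hw0
  -- it is also in the spectrum of S*A
  have hzSA : c⁻¹ * w ∈ spectrum ℂ (S * A) := by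
    have : c⁻¹ * w ∈ spectrum ℂ (A * S) \ {0} := ⟨hz, hz0⟩
    rw [spectrum.nonzero_mul_comm] at this
    exact this.1
  -- hence lam * (c⁻¹ * w) ∈ spectrum T, hence lam * w ∈ spectrum (c • (A * S))
  have hlz : lam * (c⁻¹ * w) ∈ spectrum ℂ (A * S) := by
    rw [hSA] at hzSA
    have := aux_smul_spec (inv_ne_zero hlam0) hzSA
    rwa [inv_inv] at this
  have hlw : lam * w ∈ spectrum ℂ (c • (A * S)) := by
    have := aux_smul_spec' hc0 hlz
    have hrw : c * (lam * (c⁻¹ * w)) = lam * w := by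
      field_simp
    rwa [hrw] at this
  have him : (lam * w).im = 0 := hR.im_eq_zero_of_mem_spectrum hlw
  have hwre : w.re ≠ 0 := by
    intro h'
    exact hw0 (Complex.ext h' hwim)
  have : lam.im * w.re = 0 := by
    have := him
    rw [Complex.mul_im, hwim] at this
    simpa using this
  have hlim : lam.im = 0 := by
    rcases mul_eq_zero.mp this with h' | h'
    · exact h'
    · exact absurd h' hwre
  rw [hlam, Complex.exp_ofReal_mul_I_im] at hlim
  exact hlim

/-- Part 2 core: both self-adjoint, one positive, anticommuting and nonzero product
is impossible. -/
private lemma aux_pos (A B : H →L[ℂ] H) (hA : IsSelfAdjoint A) (hB : IsSelfAdjoint B)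
    (hP : A.IsPositive ∨ B.IsPositive) (h : A * B = -(B * A)) (hne : A * B ≠ 0) :
    False := by
  have hstarT : star (A * B) = -(A * B) := by
    rw [star_mul, hA.star_eq, hB.star_eq, h, neg_neg]
  have hiT : IsSelfAdjoint (I • (A * B)) := by
    rw [IsSelfAdjoint, star_smul, hstarT]
    simp [Complex.star_def, Complex.conj_I]
  have hiT0 : I • (A * B) ≠ 0 := smul_ne_zero Complex.I_ne_zero hne
  obtain ⟨w, hw, hw0, hwim⟩ := aux_spec_exists hiT hiT0
  have hz : I⁻¹ * w ∈ spectrum ℂ (A * B) := aux_smul_spec Complex.I_ne_zero hw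
  have hz0 : I⁻¹ * w ≠ 0 := mul_ne_zero (inv_ne_zero Complex.I_ne_zero) hw0
  have hzim : (I⁻¹ * w).im ≠ 0 := by
    rw [Complex.inv_I]
    intro h'
    apply hw0
    rw [Complex.mul_im] at h'
    simp [hwim] at h'
    exact Complex.ext (by simpa using h') hwim
  -- now show the spectrum point must be real, contradiction
  have key : ∀ C D : H →L[ℂ] H, C.IsPositive → IsSelfAdjoint D →
      I⁻¹ * w ∈ spectrum ℂ (C * D) → False := by
    intro C D hC hD hmem
    have hC0 : (0 : H →L[ℂ] H) ≤ C := (nonneg_iff_isPositive C).mpr hC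
    set Q : H →L[ℂ] H := CFC.sqrt C with hQ
    have hQ2 : Q * Q = C := CFC.sqrt_mul_sqrt_self C hC0
    have hQsa : IsSelfAdjoint Q := IsSelfAdjoint.of_nonneg (CFC.sqrt_nonneg C)
    have hmem' : I⁻¹ * w ∈ spectrum ℂ (Q * D * Q) := by
      have h1 : I⁻¹ * w ∈ spectrum ℂ (Q * (Q * D)) \ {0} := by
        rw [← mul_assoc, hQ2]; exact ⟨hmem, hz0⟩
      rw [spectrum.nonzero_mul_comm] at h1
      rw [mul_assoc]
      exact h1.1
    have hMsa : IsSelfAdjoint (Q * D * Q) := by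
      rw [IsSelfAdjoint, star_mul, star_mul, hQsa.star_eq, hD.star_eq, mul_assoc]
    exact hzim (hMsa.im_eq_zero_of_mem_spectrum hmem')
  rcases hP with hPA | hPB
  · exact key A B hPA hB hz
  · have hz' : I⁻¹ * w ∈ spectrum ℂ (B * A) := by
      have : I⁻¹ * w ∈ spectrum ℂ (A * B) \ {0} := ⟨hz, hz0⟩
      rw [spectrum.nonzero_mul_comm] at this
      exact this.1
    exact key B A hPB hA hz'

end Aux

/-- Corollary to Brooke et al.. Let `A∘B ≠ 0` and
`A∘B = e^{iφ} • (B∘A)` with `φ ∈ [0, 2π)`. Then: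
(1) if `A` or `B` is self-adjoint, `φ = 0` or `φ = π`;
(2) if both are self-adjoint and one of them is positive, `φ = 0`. -/
theorem anyonic_phase_constraints
    {H : Type*} [NormedAddCommGroup H] [InnerProductSpace ℂ H] [CompleteSpace H]
    (A B : H →L[ℂ] H) (φ : ℝ) (hφ0 : 0 ≤ φ) (hφ2π : φ < 2 * Real.pi)
    (hne : A ∘L B ≠ 0)
    (hcomm : A ∘L B = Complex.exp (φ * Complex.I) • (B ∘L A)) :
    ((IsSelfAdjoint A ∨ IsSelfAdjoint B) → φ = 0 ∨ φ = Real.pi) ∧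
      ((IsSelfAdjoint A ∧ IsSelfAdjoint B ∧ (A.IsPositive ∨ B.IsPositive)) → φ = 0) := by
  set lam : ℂ := Complex.exp (φ * Complex.I) with hlam
  have hlam0 : lam ≠ 0 := Complex.exp_ne_zero _
  have hne' : A * B ≠ 0 := hne
  have h : A * B = lam • (B * A) := hcomm
  have hlaminv : star lam = lam⁻¹ := by
    rw [Complex.star_def, hlam, ← Complex.exp_conj, ← Complex.exp_neg]
    congr 1
    rw [map_mul, Complex.conj_ofReal, Complex.conj_I]
    ring
  -- Part 1
  have part1 : (IsSelfAdjoint A ∨ IsSelfAdjoint B) → φ = 0 ∨ φ = Real.pi := by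
    intro hsa
    have hsin : Real.sin φ = 0 := by
      rcases hsa with hA | hB
      · -- A self-adjoint; use C = B + B†, D = I•(B - B†)
        have hstar : star B * A = lam⁻¹ • (A * star B) := by
          have h2 := congrArg star h
          rw [star_mul, star_smul, star_mul, hA.star_eq] at h2
          rw [hlaminv] at h2
          exact h2
        have hBdag : A * star B = lam • (star B * A) := by
          rw [hstar, smul_smul, mul_inv_cancel₀ hlam0, one_smul]
        set C : H →L[ℂ] H := B + star B with hCdef
        set D : H →L[ℂ] H := I • (B - star B) with hDdef
        have hCsa : IsSelfAdjoint C := by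
          rw [IsSelfAdjoint, hCdef, star_add, star_star, add_comm]
        have hDsa : IsSelfAdjoint D := by
          rw [IsSelfAdjoint, hDdef, star_smul, star_sub, star_star]
          simp only [Complex.star_def, Complex.conj_I, neg_smul, smul_sub]
          abel
        have hAC : A * C = lam • (C * A) := by
          rw [hCdef, mul_add, add_mul, smul_add, h, hBdag]
        have hAD : A * D = lam • (D * A) := by
          rw [hDdef, mul_smul_comm, smul_mul_assoc, mul_sub, sub_mul, smul_sub, h, hBdag,
            smul_comm lam I, smul_sub lam (B * A) (star B * A), smul_sub I]
        have hsum : A * C - I • (A * D) = (2 : ℂ) • (A * B) := by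
          rw [hCdef, hDdef, mul_add, mul_smul_comm, smul_smul, Complex.I_mul_I, neg_one_smul,
            mul_sub, sub_neg_eq_add, two_smul]
          abel
        by_cases hc : A * C = 0
        · have hd : A * D ≠ 0 := by
            intro hd
            apply hne'
            have h2 : (2 : ℂ) • (A * B) = 0 := by rw [← hsum, hc, hd, smul_zero, zero_sub, neg_zero]
            have := smul_eq_zero.mp h2
            rcases this with h' | h'
            · norm_num at h'
            · exact h'
          exact aux_core A D hA hDsa φ hAD hd
        · exact aux_core A C hA hCsa φ hAC hc
      · -- B self-adjoint; use C = A + A†, D = I•(A - A†)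
        have hstar : B * star A = lam⁻¹ • (star A * B) := by
          have h2 := congrArg star h
          rw [star_mul, star_smul, star_mul, hB.star_eq] at h2
          rw [hlaminv] at h2
          exact h2
        have hAdag : star A * B = lam • (B * star A) := by
          rw [hstar, smul_smul, mul_inv_cancel₀ hlam0, one_smul]
        set C : H →L[ℂ] H := A + star A with hCdef
        set D : H →L[ℂ] H := I • (A - star A) with hDdef
        have hCsa : IsSelfAdjoint C := by
          rw [IsSelfAdjoint, hCdef, star_add, star_star, add_comm]
        have hDsa : IsSelfAdjoint D := by
          rw [IsSelfAdjoint, hDdef, star_smul, star_sub, star_star]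
          simp only [Complex.star_def, Complex.conj_I, neg_smul, smul_sub]
          abel
        have hCB : C * B = lam • (B * C) := by
          rw [hCdef, add_mul, mul_add, smul_add, h, hAdag]
        have hDB : D * B = lam • (B * D) := by
          rw [hDdef, smul_mul_assoc, mul_smul_comm, sub_mul, mul_sub, smul_sub, h, hAdag,
            smul_comm lam I, smul_sub lam (B * A) (B * star A), smul_sub I]
        have hsum : C * B - I • (D * B) = (2 : ℂ) • (A * B) := by
          rw [hCdef, hDdef, add_mul, smul_mul_assoc, smul_smul, Complex.I_mul_I, neg_one_smul,
            sub_mul, sub_neg_eq_add, two_smul]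
          abel
        by_cases hc : C * B = 0
        · have hd : D * B ≠ 0 := by
            intro hd
            apply hne'
            have h2 : (2 : ℂ) • (A * B) = 0 := by rw [← hsum, hc, hd, smul_zero, zero_sub, neg_zero]
            rcases smul_eq_zero.mp h2 with h' | h'
            · norm_num at h'
            · exact h'
          exact aux_core D B hDsa hB φ hDB hd
        · exact aux_core C B hCsa hB φ hCB hc
    rw [Real.sin_eq_zero_iff] at hsin
    obtain ⟨n, hn⟩ := hsin
    have hpi : (0 : ℝ) < Real.pi := Real.pi_pos
    have hn0 : 0 ≤ n := by
      by_contra hcon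
      push_neg at hcon
      have : (n : ℝ) * Real.pi < 0 := by
        apply mul_neg_of_neg_of_pos _ hpi
        exact_mod_cast hcon
      linarith [hn ▸ hφ0]
    have hn2 : n < 2 := by
      by_contra hcon
      push_neg at hcon
      have : (2 : ℝ) * Real.pi ≤ (n : ℝ) * Real.pi := by
        apply mul_le_mul_of_nonneg_right _ hpi.le
        exact_mod_cast hcon
      linarith [hn ▸ hφ2π]
    interval_cases n
    · left; rw [← hn]; simp
    · right; rw [← hn]; simp
  refine ⟨part1, ?_⟩
  -- Part 2
  rintro ⟨hA, hB, hP⟩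
  rcases part1 (Or.inl hA) with h0 | hpi
  · exact h0
  · exfalso
    subst hpi
    have hlameq : lam = -1 := by
      rw [hlam, Complex.exp_pi_mul_I]
    have hanti : A * B = -(B * A) := by
      rw [h, hlameq, neg_smul, one_smul]
    exact aux_pos A B hA hB hP hanti hne'
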